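/- Let c_imp ≥ c_exp and f(x) = c_imp·max(x,0) + c_exp·min(x,0). Let P and Q be two partitions of the index set {1,…,n} such that Q refines P. For real numbers x_1,…,x_n, define Cost(R) = Σ over blocks B of R of f(Σ_{i∈B} x_i). Then Cost(P) ≤ Cost(Q). In other words, a coarser Netting Interval (longer averaging window) never increases the electricity bill, and refining the Netting Interval is monotone: finer netting yields a bill at least as large. -/

import Mathlib

private lemma f_subadd (c_imp c_exp : ℝ) (h : c_exp ≤ c_imp)
    (f : ℝ → ℝ) (hf : ∀ x, f x = c_imp * max x 0 + c_exp * min x 0)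
    (a b : ℝ) : f (a + b) ≤ f a + f b := by
  simp only [hf]
  rcases le_total a 0 with ha | ha <;> rcases le_total b 0 with hb | hb <;>
    rcases le_total (a + b) 0 with hab | hab <;>
    simp [max_eq_left, max_eq_right, min_eq_left, min_eq_right, *] <;> nlinarith

private lemma f_sum_le {γ : Type*} (c_imp c_exp : ℝ) (h : c_exp ≤ c_imp)
    (f : ℝ → ℝ) (hf : ∀ x, f x = c_imp * max x 0 + c_exp * min x 0)
    (S : Finset γ) (g : γ → ℝ) : f (∑ s ∈ S, g s) ≤ ∑ s ∈ S, f (g s) := by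
  induction S using Finset.cons_induction with
  | empty => simp [hf]
  | cons a S ha ih =>
    rw [Finset.sum_cons, Finset.sum_cons]
    calc f (g a + ∑ s ∈ S, g s) ≤ f (g a) + f (∑ s ∈ S, g s) :=
          f_subadd c_imp c_exp h f hf _ _
      _ ≤ f (g a) + ∑ s ∈ S, f (g s) := by linarith

/-- Refining the Netting Interval partition never decreases the bill:
if `Q` refines `P` then `Cost(P) ≤ Cost(Q)`. -/
theorem netting_refinement_monotone (c_imp c_exp : ℝ) (h : c_exp ≤ c_imp)
    (f : ℝ → ℝ) (hf : ∀ x, f x = c_imp * max x 0 + c_exp * min x 0)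
    (n : ℕ) (x : Fin n → ℝ)
    (P Q : Finpartition (Finset.univ : Finset (Fin n)))
    (hQP : Q ≤ P) :
    ∑ B ∈ P.parts, f (∑ i ∈ B, x i) ≤ ∑ B ∈ Q.parts, f (∑ i ∈ B, x i) := by
  classical
  -- map each part of Q to the part of P containing it
  set g : Finset (Fin n) → Finset (Fin n) :=
    fun C => if hC : C.Nonempty then P.part hC.choose else ∅ with hg
  have hmap : ∀ C ∈ Q.parts, g C ∈ P.parts ∧ C ⊆ g C := by
    intro C hC
    have hCne : C.Nonempty := Q.nonempty_of_mem_parts hC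
    obtain ⟨B, hB, hCB⟩ := hQP hC
    have ha : hCne.choose ∈ C := hCne.choose_spec
    have : g C = B := by
      rw [hg]; simp only [dif_pos hCne]
      exact P.part_eq_of_mem hB (hCB ha)
    rw [this]; exact ⟨hB, hCB⟩
  have key : ∑ C ∈ Q.parts, f (∑ i ∈ C, x i)
      = ∑ B ∈ P.parts, ∑ C ∈ Q.parts.filter (fun C => g C = B), f (∑ i ∈ C, x i) :=
    (Finset.sum_fiberwise_of_maps_to (fun C hC => (hmap C hC).1) _).symm
  rw [key]
  refine Finset.sum_le_sum fun B hB => ?_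
  -- B is the disjoint union of the parts of Q in its fiber
  have hBeq : B = (Q.parts.filter (fun C => g C = B)).biUnion id := by
    ext i
    simp only [Finset.mem_biUnion, Finset.mem_filter, id]
    constructor
    · intro hiB
      refine ⟨Q.part i, ⟨Q.part_mem.2 (Finset.mem_univ i), ?_⟩, Q.mem_part (Finset.mem_univ i)⟩
      obtain ⟨hB', hsub⟩ := hmap _ (Q.part_mem.2 (Finset.mem_univ i))
      exact P.eq_of_mem_parts hB' hB (hsub (Q.mem_part (Finset.mem_univ i))) hiB
    · rintro ⟨C, ⟨hC, hgC⟩, hiC⟩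
      exact hgC ▸ (hmap C hC).2 hiC
  have hdisj : (↑(Q.parts.filter (fun C => g C = B)) : Set (Finset (Fin n))).PairwiseDisjoint id := by
    intro a ha b hb hab
    exact Q.disjoint (Finset.mem_filter.1 ha).1 (Finset.mem_filter.1 hb).1 hab
  have hsum : ∑ i ∈ B, x i = ∑ C ∈ Q.parts.filter (fun C => g C = B), ∑ i ∈ C, x i := by
    conv_lhs => rw [hBeq, Finset.sum_biUnion hdisj]
    rfl
  rw [hsum]
  exact f_sum_le c_imp c_exp h f hf _ _
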